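/- Let K be an imaginary quadratic field and S a finite set of finite places lying over rational primes p_1,…,p_k. For any x, y, z ∈ O_{K,S}^× there exists a multi-index β ∈ {0,1,2,3,4}^k such that, writing p^β = ∏ p_i^{β_i}, one has v_𝔭(p^β x) ≠ 0 and v_𝔭(p^β z) ≠ v_𝔭(y) for every place 𝔭 ∈ S. -/

import Mathlib

open IsDedekindDomain NumberField
open scoped Multiplicative

/-- The normalized additive valuation at a finite place (`vval v x = v_𝔭(x)`). -/
noncomputable def vval {K : Type*} [Field K] [NumberField K] (v : HeightOneSpectrum (𝓞 K))
    (x : K) : ℤ :=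
  if h : v.valuation K x = 0 then 0 else - Multiplicative.toAdd (WithZero.unzero h)

section helpers

variable {K : Type*} [Field K] [NumberField K] (v : HeightOneSpectrum (𝓞 K))

lemma vval_spec {w : K} (hw : w ≠ 0) :
    v.valuation K w = ((Multiplicative.ofAdd (-(vval v w)) : Multiplicative ℤ) : WithZero (Multiplicative ℤ)) := by
  have h : v.valuation K w ≠ 0 := (Valuation.ne_zero_iff _).mpr hw
  rw [vval, dif_neg h, neg_neg, ofAdd_toAdd, WithZero.coe_unzero]

lemma vval_eq_of {w : K} (hw : w ≠ 0) {m : ℤ}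
    (h : v.valuation K w = ((Multiplicative.ofAdd (-m) : Multiplicative ℤ) : WithZero (Multiplicative ℤ))) :
    vval v w = m := by
  have := (vval_spec v hw).symm.trans h
  rw [WithZero.coe_inj] at this
  have h2 := Multiplicative.ofAdd.injective this
  omega

lemma vval_one : vval v (1 : K) = 0 := by
  apply vval_eq_of v one_ne_zero
  simp

lemma vval_mul {a b : K} (ha : a ≠ 0) (hb : b ≠ 0) :
    vval v (a * b) = vval v a + vval v b := by
  apply vval_eq_of v (mul_ne_zero ha hb)
  rw [map_mul, vval_spec v ha, vval_spec v hb, ← WithZero.coe_mul, ← ofAdd_add, neg_add]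

lemma vval_pow {a : K} (ha : a ≠ 0) (n : ℕ) :
    vval v (a ^ n) = n * vval v a := by
  induction n with
  | zero => simpa using vval_one v
  | succ n ih =>
      rw [pow_succ, vval_mul v (pow_ne_zero _ ha) ha, ih]
      push_cast; ring

lemma vval_prod {ι : Type*} (s : Finset ι) (f : ι → K) (hf : ∀ i ∈ s, f i ≠ 0) :
    vval v (∏ i ∈ s, f i) = ∑ i ∈ s, vval v (f i) := by
  classical
  induction s using Finset.cons_induction with
  | empty => simpa using vval_one v
  | cons a s ha ih =>
      rw [Finset.prod_cons, Finset.sum_cons,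
        vval_mul v (hf a (Finset.mem_cons_self a s))
          (Finset.prod_ne_zero_iff.mpr fun i hi => hf i (Finset.mem_cons_of_mem hi)),
        ih fun i hi => hf i (Finset.mem_cons_of_mem hi)]

lemma natCast_ne_zero {q : ℕ} (hq : q.Prime) : (q : K) ≠ 0 := by
  exact_mod_cast Nat.cast_ne_zero.mpr hq.ne_zero

lemma vval_natCast_pos {q : ℕ} (hq : q.Prime) (hmem : ((q : ℕ) : 𝓞 K) ∈ v.asIdeal) :
    1 ≤ vval v (q : K) := by
  have hne : (q : K) ≠ 0 := natCast_ne_zero hq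
  have hcast : ((q : ℕ) : K) = algebraMap (𝓞 K) K ((q : ℕ) : 𝓞 K) := by push_cast; rfl
  have hlt : v.valuation K ((q : ℕ) : K) < 1 := by
    rw [hcast, HeightOneSpectrum.valuation_lt_one_iff_dvd, Ideal.dvd_iff_le,
      Ideal.span_singleton_le_iff_mem]
    exact hmem
  rw [vval_spec v hne, ← WithZero.coe_one, WithZero.coe_lt_coe] at hlt
  have : (-(vval v (q : K))) < 0 := hlt
  omega

lemma vval_natCast_zero {q : ℕ} (hq : q.Prime) (hmem : ((q : ℕ) : 𝓞 K) ∉ v.asIdeal) :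
    vval v (q : K) = 0 := by
  have hne : (q : K) ≠ 0 := natCast_ne_zero hq
  have hcast : ((q : ℕ) : K) = algebraMap (𝓞 K) K ((q : ℕ) : 𝓞 K) := by push_cast; rfl
  have hle : v.valuation K ((q : ℕ) : K) ≤ 1 := by
    rw [hcast]; exact HeightOneSpectrum.valuation_le_one v _
  have hnlt : ¬ v.valuation K ((q : ℕ) : K) < 1 := by
    rw [hcast, HeightOneSpectrum.valuation_lt_one_iff_dvd, Ideal.dvd_iff_le,
      Ideal.span_singleton_le_iff_mem]
    exact hmem
  have heq : v.valuation K ((q : ℕ) : K) = 1 := le_antisymm hle (not_lt.mp hnlt)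
  exact vval_eq_of v hne (by rw [heq]; simp)

/-- norm of a rational prime in a quadratic field -/
lemma absNorm_span_prime (hdeg : Module.finrank ℤ (𝓞 K) = 2) (q : ℕ) :
    Ideal.absNorm (Ideal.span {((q : ℕ) : 𝓞 K)} : Ideal (𝓞 K)) = q ^ 2 := by
  rw [Ideal.absNorm_span_singleton]
  have : ((q : ℕ) : 𝓞 K) = algebraMap ℤ (𝓞 K) (q : ℤ) := by push_cast; rfl
  rw [this, Algebra.norm_algebraMap_of_basis (NumberField.RingOfIntegers.basis K)]
  rw [← Module.finrank_eq_card_chooseBasisIndex, hdeg]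
  simp [Int.natAbs_pow]

/-- at most two places of `K` (quadratic) lie over a rational prime `q` -/
lemma card_places_le_two (hdeg : Module.finrank ℤ (𝓞 K) = 2)
    {q : ℕ} (hq : q.Prime) (T : Finset (HeightOneSpectrum (𝓞 K)))
    (hT : ∀ v ∈ T, ((q : ℕ) : 𝓞 K) ∈ v.asIdeal) : T.card ≤ 2 := by
  by_contra hc
  push_neg at hc
  obtain ⟨a, b, c, ha, hb, hcm, hab, hac, hbc⟩ := Finset.two_lt_card_iff.mp hc
  have hdvd : ∀ w ∈ T, w.asIdeal ∣ Ideal.span {((q : ℕ) : 𝓞 K)} := fun w hw => by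
    rw [Ideal.dvd_iff_le, Ideal.span_singleton_le_iff_mem]; exact hT w hw
  have hne : ∀ w w' : HeightOneSpectrum (𝓞 K), w ≠ w' → w.asIdeal ≠ w'.asIdeal := by
    intro w w' h hcontra
    exact h (HeightOneSpectrum.ext hcontra)
  have hcop : ∀ w w' : HeightOneSpectrum (𝓞 K), w ≠ w' → IsCoprime w.asIdeal w'.asIdeal :=
    fun w w' h => Ideal.isCoprime_iff_sup_eq.mpr
      (Ideal.IsMaximal.coprime_of_ne w.isMaximal w'.isMaximal (hne w w' h))
  have hdvd3 : a.asIdeal * b.asIdeal * c.asIdeal ∣ Ideal.span {((q : ℕ) : 𝓞 K)} := by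
    refine IsCoprime.mul_dvd ?_ (IsCoprime.mul_dvd (hcop a b hab) (hdvd a ha) (hdvd b hb))
      (hdvd c hcm)
    exact IsCoprime.mul_left (hcop a c hac) (hcop b c hbc)
  have hNdvd : Ideal.absNorm (a.asIdeal * b.asIdeal * c.asIdeal) ∣ q ^ 2 := by
    rw [← absNorm_span_prime hdeg q]
    obtain ⟨d, hd⟩ := hdvd3
    exact ⟨Ideal.absNorm d, by rw [hd, map_mul]⟩
  rw [map_mul, map_mul] at hNdvd
  have hqN : ∀ w ∈ T, q ∣ Ideal.absNorm w.asIdeal := by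
    intro w hw
    have h1 : Ideal.absNorm w.asIdeal ∣ q ^ 2 := by
      rw [← absNorm_span_prime hdeg q]
      exact Ideal.absNorm_dvd_absNorm_of_le ((Ideal.span_singleton_le_iff_mem _).mpr (hT w hw))
    have h2 : Ideal.absNorm w.asIdeal ≠ 1 := by
      rw [Ne, Ideal.absNorm_eq_one_iff]
      exact w.isMaximal.ne_top
    rcases (Nat.dvd_prime_pow hq).mp h1 with ⟨m, hm, hmeq⟩
    interval_cases m
    · rw [pow_zero] at hmeq; exact absurd hmeq h2
    · rw [hmeq, pow_one]
    · rw [hmeq]; exact dvd_pow_self q (by norm_num)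
  have h3 : q ^ 3 ∣ q ^ 2 := by
    calc q ^ 3 = q * q * q := by ring
    _ ∣ Ideal.absNorm a.asIdeal * Ideal.absNorm b.asIdeal * Ideal.absNorm c.asIdeal :=
        mul_dvd_mul (mul_dvd_mul (hqN a ha) (hqN b hb)) (hqN c hcm)
    _ ∣ q ^ 2 := hNdvd
  rw [Nat.pow_dvd_pow_iff_le_right hq.one_lt] at h3
  omega

lemma exists_good {K : Type*} [Field K] [NumberField K]
    (S : Set (HeightOneSpectrum (𝓞 K))) (hSfin : S.Finite)
    (hdeg2 : Module.finrank ℤ (𝓞 K) = 2)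
    (q : ℕ) (hq : q.Prime)
    (a c b : HeightOneSpectrum (𝓞 K) → ℤ) :
    ∃ t : ℕ, t ≤ 4 ∧ ∀ v ∈ S, ((q : ℕ) : 𝓞 K) ∈ v.asIdeal →
      ((t : ℤ) * vval v (q : K) + a v ≠ 0 ∧ (t : ℤ) * vval v (q : K) + c v ≠ b v) := by
  classical
  set T : Finset (HeightOneSpectrum (𝓞 K)) :=
    hSfin.toFinset.filter (fun v => ((q : ℕ) : 𝓞 K) ∈ v.asIdeal) with hT
  have hTcard : T.card ≤ 2 :=
    card_places_le_two hdeg2 hq T (fun v hv => (Finset.mem_filter.mp hv).2)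
  set F : Finset ℕ := T.biUnion (fun v =>
    {((-(a v)) / (vval v (q : K))).toNat, ((b v - c v) / (vval v (q : K))).toNat}) with hF
  have hFcard : F.card ≤ 4 := by
    refine le_trans Finset.card_biUnion_le (le_trans (Finset.sum_le_card_nsmul T _ 2
      (fun v _ => (Finset.card_insert_le _ _).trans (by simp))) ?_)
    simp only [smul_eq_mul]
    omega
  have hns : ¬ (Finset.range 5 ⊆ F) := by
    intro hsub
    have := Finset.card_le_card hsub
    rw [Finset.card_range] at this
    omega
  obtain ⟨t, htmem, htF⟩ := Finset.not_subset.mp hns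
  refine ⟨t, by have := Finset.mem_range.mp htmem; omega, ?_⟩
  · intro v hv hmem
    have hvT : v ∈ T := Finset.mem_filter.mpr ⟨hSfin.mem_toFinset.mpr hv, hmem⟩
    have he : 1 ≤ vval v (q : K) := vval_natCast_pos v hq hmem
    constructor
    · intro hcon
      apply htF
      refine Finset.mem_biUnion.mpr ⟨v, hvT, ?_⟩
      have : (-(a v)) / (vval v (q : K)) = (t : ℤ) := by
        have : -(a v) = (t : ℤ) * vval v (q : K) := by linarith
        rw [this, Int.mul_ediv_cancel _ (by omega)]
      simp [this]
    · intro hcon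
      apply htF
      refine Finset.mem_biUnion.mpr ⟨v, hvT, ?_⟩
      have : (b v - c v) / (vval v (q : K)) = (t : ℤ) := by
        have : b v - c v = (t : ℤ) * vval v (q : K) := by linarith
        rw [this, Int.mul_ediv_cancel _ (by omega)]
      simp [this]

end helpers

/-- let `S` be a finite set of finite places of an imaginary quadratic field `K`,
lying over the rational primes `p 0, …, p (k-1)`.  For all `S`-units `x, y, z` there is a
multi-index `β ∈ {0,…,4}^k` such that `v_𝔭(p^β x) ≠ 0` and `v_𝔭(p^β z) ≠ v_𝔭(y)` for all
`𝔭 ∈ S`. -/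
theorem exists_multiindex {K : Type*} [Field K] [NumberField K]
    (hdeg : Module.finrank ℚ K = 2) (himg : IsEmpty (K →+* ℝ))
    (S : Set (HeightOneSpectrum (𝓞 K))) (hSfin : S.Finite)
    (k : ℕ) (p : Fin k → ℕ) (hprime : ∀ i, (p i).Prime)
    (hbelow : ∀ v ∈ S, ∃ i, v.asIdeal.comap (algebraMap ℤ (𝓞 K)) = Ideal.span {(p i : ℤ)})
    (x y z : (S.integer K)ˣ) :
    ∃ β : Fin k → ℕ, (∀ i, β i ≤ 4) ∧
      ∀ v ∈ S,
        vval v ((∏ i, (p i : K) ^ (β i)) * ((x : S.integer K) : K)) ≠ 0 ∧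
        vval v ((∏ i, (p i : K) ^ (β i)) * ((z : S.integer K) : K)) ≠
          vval v ((y : S.integer K) : K) := by
  classical
  have hdeg2 : Module.finrank ℤ (𝓞 K) = 2 := by
    rw [NumberField.RingOfIntegers.rank]; exact hdeg
  set xK : K := ((x : S.integer K) : K) with hxK
  set yK : K := ((y : S.integer K) : K) with hyK
  set zK : K := ((z : S.integer K) : K) with hzK
  have hx0 : xK ≠ 0 := by
    simp only [hxK, ne_eq, ZeroMemClass.coe_eq_zero]
    exact Units.ne_zero x
  have hz0 : zK ≠ 0 := by
    simp only [hzK, ne_eq, ZeroMemClass.coe_eq_zero]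
    exact Units.ne_zero z
  choose t ht hgood using fun i => exists_good S hSfin hdeg2 (p i) (hprime i)
    (fun v => vval v xK) (fun v => vval v zK) (fun v => vval v yK)
  set β : Fin k → ℕ := fun i => if ∀ j, p j = p i → i ≤ j then t i else 0 with hβ
  have hβle : ∀ i, β i ≤ 4 := by
    intro i
    by_cases h : ∀ j, p j = p i → i ≤ j
    · simp only [hβ, if_pos h]; exact ht i
    · simp [hβ, if_neg h]
  refine ⟨β, hβle, ?_⟩
  intro v hv
  obtain ⟨i0, hi0⟩ := hbelow v hv
  -- membership characterization
  have hmemiff : ∀ j, ((p j : ℕ) : 𝓞 K) ∈ v.asIdeal ↔ p j = p i0 := by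
    intro j
    constructor
    · intro hj
      have h1 : (algebraMap ℤ (𝓞 K)) ((p j : ℕ) : ℤ) ∈ v.asIdeal := by
        rw [map_natCast]; exact_mod_cast hj
      have h2 : ((p j : ℕ) : ℤ) ∈ v.asIdeal.comap (algebraMap ℤ (𝓞 K)) := h1
      rw [hi0, Ideal.mem_span_singleton] at h2
      have h3 : p i0 ∣ p j := Int.natCast_dvd_natCast.mp h2
      exact ((Nat.prime_dvd_prime_iff_eq (hprime i0) (hprime j)).mp h3).symm
    · intro hj
      have h2 : ((p j : ℕ) : ℤ) ∈ v.asIdeal.comap (algebraMap ℤ (𝓞 K)) := by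
        rw [hi0, Ideal.mem_span_singleton, hj]
      have := h2
      rw [Ideal.mem_comap, map_natCast] at this
      exact_mod_cast this
  have hmem0 : ((p i0 : ℕ) : 𝓞 K) ∈ v.asIdeal := (hmemiff i0).mpr rfl
  -- the minimal index over this prime
  set M : Finset (Fin k) := Finset.univ.filter (fun j => p j = p i0) with hM
  have hMne : M.Nonempty := ⟨i0, by simp [hM]⟩
  set m : Fin k := M.min' hMne with hm
  have hmM : m ∈ M := M.min'_mem hMne
  have hpm : p m = p i0 := (Finset.mem_filter.mp hmM).2
  have hβm : β m = t m := by
    rw [hβ]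
    refine if_pos ?_
    intro j hj
    exact M.min'_le j (by simp [hM, hj ▸ hpm ▸ hj]; omega)
  -- sum formula
  have hprodval : ∀ w : K, w ≠ 0 →
      vval v ((∏ i, (p i : K) ^ (β i)) * w) = (t m : ℤ) * vval v ((p m : ℕ) : K) + vval v w := by
    intro w hw
    have hfac : ∀ i : Fin k, ((p i : K) ^ (β i)) ≠ 0 :=
      fun i => pow_ne_zero _ (natCast_ne_zero (hprime i))
    have hprod0 : (∏ i, (p i : K) ^ (β i)) ≠ 0 :=
      Finset.prod_ne_zero_iff.mpr fun i _ => hfac i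
    rw [vval_mul v hprod0 hw, vval_prod v _ _ (fun i _ => hfac i)]
    congr 1
    have hterm : ∀ i : Fin k, vval v ((p i : K) ^ (β i)) = (β i : ℤ) * vval v ((p i : ℕ) : K) :=
      fun i => vval_pow v (natCast_ne_zero (hprime i)) (β i)
    rw [Finset.sum_congr rfl (fun i _ => hterm i)]
    rw [Finset.sum_eq_single m]
    · rw [hβm]
    · intro i _ hi
      by_cases hpi : p i = p i0
      · have : β i = 0 := by
          rw [hβ]
          refine if_neg ?_
          push_neg
          refine ⟨m, by rw [hpm, hpi], ?_⟩
          have : m ≤ i := M.min'_le i (by simp [hM, hpi])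
          omega
        simp [this]
      · rw [vval_natCast_zero v (hprime i) (fun hc => hpi ((hmemiff i).mp hc))]
        ring
    · intro habs
      exact absurd (Finset.mem_univ m) habs
  have hmemm : ((p m : ℕ) : 𝓞 K) ∈ v.asIdeal := (hmemiff m).mpr hpm
  have hg := hgood m v hv hmemm
  constructor
  · rw [hprodval xK hx0]
    exact hg.1
  · rw [hprodval zK hz0]
    exact hg.2
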